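/- Let M be a closed oriented Riemannian 4-manifold with volume form dvol and total volume Vol(M), let a ∈ H²(M;ℝ) with a² > 0, and let ρ be a symplectic form representing a with ρ∧ρ > 0. Then (∫_M |ρ| dvol)² ≤ c·(E(ρ) - Vol(M)), where c := ⟨a²,[M]⟩ = ∫_M ρ∧ρ and E(ρ) := ∫_M 2|ρ⁺|²/(|ρ⁺|² - |ρ⁻|²) dvol. -/

import Mathlib

open Matrix MeasureTheory

noncomputable section

/-- Vectors in ℝ⁴. -/
abbrev V4 : Type := Fin 4 → ℝ

/-- 2-forms on ℝ⁴, represented by their (antisymmetric) coefficient matrices. -/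
abbrev Mat4 : Type := Matrix (Fin 4) (Fin 4) ℝ

/-- The wedge product of two 2-forms, as the coefficient of dx0∧dx1∧dx2∧dx3. -/
def w22 (A B : Mat4) : ℝ :=
  A 0 1 * B 2 3 - A 0 2 * B 1 3 + A 0 3 * B 1 2 +
  A 2 3 * B 0 1 - A 1 3 * B 0 2 + A 1 2 * B 0 3

/-- The wedge product of a 1-form and a 3-form (3-forms are written in the
basis σ_m = ι(e_m)(dx0∧dx1∧dx2∧dx3)), as a multiple of dx0∧dx1∧dx2∧dx3. -/
def w13 (l b : V4) : ℝ := l ⬝ᵥ b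

/-- The wedge product of a 2-form and a 1-form, as a 3-form in the basis σ_m. -/
def w21 (A : Mat4) (l : V4) : V4 :=
  ![A 1 2 * l 3 - A 1 3 * l 2 + A 2 3 * l 1,
    -(A 0 2 * l 3 - A 0 3 * l 2 + A 2 3 * l 0),
    A 0 1 * l 3 - A 0 3 * l 1 + A 1 3 * l 0,
    -(A 0 1 * l 2 - A 0 2 * l 1 + A 1 2 * l 0)]

/-- Interior product of a vector with a 2-form. -/
def iota2 (v : V4) (A : Mat4) : V4 := Aᵀ.mulVec v

/-- Interior product of a vector with a 4-form c·dx0∧dx1∧dx2∧dx3. -/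
def iota4 (v : V4) (c : ℝ) : V4 := c • v

/-- The metric volume form of the inner product with Gram matrix G, as a
multiple of dx0∧dx1∧dx2∧dx3 (standard orientation). -/
def volScalar (G : Mat4) : ℝ := Real.sqrt G.det

/-- The inner product with Gram matrix G. -/
def bilin (G : Mat4) (v w : V4) : ℝ := v ⬝ᵥ G.mulVec w

/-- The induced inner product on 1-forms. -/
def ip1 (G : Mat4) (l m : V4) : ℝ := l ⬝ᵥ G⁻¹.mulVec m

/-- The induced inner product on 2-forms. -/
def ip2 (G : Mat4) (A B : Mat4) : ℝ := (1 / 2) * (Aᵀ * G⁻¹ * B * G⁻¹).trace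

/-- The wedge-duality involution on 2-forms (the Hodge star of the standard
metric), characterized by w22 A (dual2 B) = ip2 1 A B. -/
def dual2 (A : Mat4) : Mat4 :=
  !![0, A 2 3, -(A 1 3), A 1 2;
     -(A 2 3), 0, A 0 3, -(A 0 2);
     A 1 3, -(A 0 3), 0, A 0 1;
     -(A 1 2), A 0 2, -(A 0 1), 0]

/-- The Hodge star on 2-forms of the metric with Gram matrix G,
characterized by α ∧ (hodge2 G β) = ⟨α,β⟩_G dvol_G. -/
def hodge2 (G : Mat4) (A : Mat4) : Mat4 := volScalar G • dual2 (G⁻¹ * A * G⁻¹)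

/-- The Hodge star Λ¹ → Λ³ of G, characterized by λ ∧ (hodge1 G μ) = ⟨λ,μ⟩_G dvol_G. -/
def hodge1 (G : Mat4) (m : V4) : V4 := volScalar G • G⁻¹.mulVec m

/-- The Hodge star Λ³ → Λ¹ of G, characterized by hodge1 G (hodge3 G b) = -b. -/
def hodge3 (G : Mat4) (b : V4) : V4 := -((volScalar G)⁻¹ • G.mulVec b)

/-- A complex structure J (J² = -1) is compatible with the standard orientation. -/
def posOrient (J : Mat4) : Prop :=
  ∃ v w : V4, 0 < (Matrix.of fun i k => ![v, J.mulVec v, w, J.mulVec w] k i).det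

/-- The inner product on 2-forms induced by the standard metric. -/
def ip2std (A B : Mat4) : ℝ := (1 / 2) * (Aᵀ * B).trace

/-- The involution R^ρ of the space of 2-forms determined by a
nondegenerate 2-form ρ (with matrix P). -/
def Rmap (P A : Mat4) : Mat4 := A - (w22 A P / (w22 P P / 2)) • P

/-- The standard hyperKähler triple ω₁ = dx0∧dx1 + dx2∧dx3, etc. -/
def sW1 : Mat4 := !![0,1,0,0; -1,0,0,0; 0,0,0,1; 0,0,-1,0]
def sW2 : Mat4 := !![0,0,1,0; 0,0,0,-1; -1,0,0,0; 0,1,0,0]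
def sW3 : Mat4 := !![0,0,0,1; 0,0,1,0; 0,-1,0,0; -1,0,0,0]

lemma ip2std_nonneg (A : Mat4) : 0 ≤ ip2std A A := by
  have : ip2std A A = (1/2) * ((A 0 0)^2 + (A 1 0)^2 + (A 2 0)^2 + (A 3 0)^2
    + (A 0 1)^2 + (A 1 1)^2 + (A 2 1)^2 + (A 3 1)^2
    + (A 0 2)^2 + (A 1 2)^2 + (A 2 2)^2 + (A 3 2)^2
    + (A 0 3)^2 + (A 1 3)^2 + (A 2 3)^2 + (A 3 3)^2) := by
    simp [ip2std, Matrix.trace, Matrix.mul_apply, Fin.sum_univ_four, Matrix.diag,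
      Matrix.transpose_apply]
    ring
  rw [this]; positivity

lemma point_id (A : Mat4) (h : Aᵀ = -A) :
    2 * ip2std ((2:ℝ)⁻¹ • (A + dual2 A)) ((2:ℝ)⁻¹ • (A + dual2 A))
      = ip2std A A + w22 A A := by
  have e : ∀ i j : Fin 4, A j i = -A i j := fun i j => by
    have := congrFun (congrFun h i) j; simpa [Matrix.transpose_apply] using this
  have e00 := e 0 0; have e11 := e 1 1; have e22 := e 2 2; have e33 := e 3 3
  have e01 := e 0 1; have e02 := e 0 2; have e03 := e 0 3
  have e12 := e 1 2; have e13 := e 1 3; have e23 := e 2 3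
  simp [ip2std, w22, dual2, Matrix.trace, Matrix.mul_apply, Fin.sum_univ_four,
    Matrix.diag, Matrix.transpose_apply, Matrix.smul_apply, Matrix.add_apply,
    Matrix.cons_val_zero, Matrix.cons_val_one, Matrix.cons_val_two, Matrix.cons_val_three,
    Matrix.head_cons, Matrix.vecHead, Matrix.vecTail,
    e01, e02, e03, e12, e13, e23]
  rw [show A 0 0 = 0 by linarith, show A 1 1 = 0 by linarith,
    show A 2 2 = 0 by linarith, show A 3 3 = 0 by linarith]
  ring

/-- Donaldson's L¹ estimate: on a closed oriented Riemannian
4-manifold (modelled as a finite measure space carrying the 2-form ρ in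
oriented orthonormal frames), (∫|ρ|)² ≤ c·(E(ρ) - Vol(M)), where
c = ∫ ρ∧ρ and E(ρ) = ∫ 2|ρ⁺|²/(|ρ⁺|²-|ρ⁻|²). -/
theorem donaldson_L1_estimate {M : Type*} [MeasurableSpace M]
    (μ : Measure M) [IsFiniteMeasure μ]
    (ρ : M → Mat4)
    (hanti : ∀ x, (ρ x)ᵀ = -(ρ x))
    (hndg : ∀ x, 0 < w22 (ρ x) (ρ x))
    (h1 : Integrable (fun x => w22 (ρ x) (ρ x)) μ)
    (h2 : Integrable (fun x =>
      2 * ip2std ((2:ℝ)⁻¹ • (ρ x + dual2 (ρ x))) ((2:ℝ)⁻¹ • (ρ x + dual2 (ρ x))) /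
        w22 (ρ x) (ρ x)) μ)
    (h3 : Integrable (fun x => Real.sqrt (ip2std (ρ x) (ρ x))) μ)
    (c E : ℝ)
    (hc : c = ∫ x, w22 (ρ x) (ρ x) ∂μ)
    (hE : E = ∫ x,
      2 * ip2std ((2:ℝ)⁻¹ • (ρ x + dual2 (ρ x))) ((2:ℝ)⁻¹ • (ρ x + dual2 (ρ x))) /
        w22 (ρ x) (ρ x) ∂μ) :
    (∫ x, Real.sqrt (ip2std (ρ x) (ρ x)) ∂μ) ^ 2 ≤ c * (E - (μ Set.univ).toReal) := by
  set n : M → ℝ := fun x => ip2std (ρ x) (ρ x) with hn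
  set w : M → ℝ := fun x => w22 (ρ x) (ρ x) with hw
  -- E-integrand equals n/w + 1
  have key : ∀ x, (2 * ip2std ((2:ℝ)⁻¹ • (ρ x + dual2 (ρ x))) ((2:ℝ)⁻¹ • (ρ x + dual2 (ρ x))) /
      w22 (ρ x) (ρ x)) = n x / w x + 1 := by
    intro x
    rw [point_id (ρ x) (hanti x)]
    field_simp [(hndg x).ne']
    simp only [n, w]
    field_simp [(hndg x).ne']
  have h2' : Integrable (fun x => n x / w x + 1) μ := by
    refine h2.congr ?_
    exact Filter.Eventually.of_forall fun x => (key x)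
  have hInw : Integrable (fun x => n x / w x) μ := by
    refine (h2'.sub (integrable_const (1:ℝ))).congr
      (Filter.Eventually.of_forall fun x => by simp)
  -- measurability
  have hmw : AEStronglyMeasurable w μ := h1.aestronglyMeasurable
  have hmsw : AEStronglyMeasurable (fun x => Real.sqrt (w x)) μ :=
    Real.continuous_sqrt.comp_aestronglyMeasurable hmw
  have hmsn : AEStronglyMeasurable (fun x => Real.sqrt (n x)) μ := h3.aestronglyMeasurable
  have hmg : AEStronglyMeasurable (fun x => Real.sqrt (n x) / Real.sqrt (w x)) μ :=
    (hmsn.aemeasurable.div hmsw.aemeasurable).aestronglyMeasurable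
  -- Memℒp facts
  have hp2 : (ENNReal.ofReal (2:ℝ)) = 2 := by norm_num
  have hf2 : MemLp (fun x => Real.sqrt (w x)) 2 μ := by
    refine (memLp_two_iff_integrable_sq hmsw).mpr ?_
    refine h1.congr (Filter.Eventually.of_forall fun x => ?_)
    exact (Real.sq_sqrt (hndg x).le).symm
  have hg2 : MemLp (fun x => Real.sqrt (n x) / Real.sqrt (w x)) 2 μ := by
    refine (memLp_two_iff_integrable_sq hmg).mpr ?_
    refine hInw.congr (Filter.Eventually.of_forall fun x => ?_)
    show n x / w x = (Real.sqrt (n x) / Real.sqrt (w x)) ^ 2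
    rw [div_pow, Real.sq_sqrt (ip2std_nonneg (ρ x)), Real.sq_sqrt (hndg x).le]
  -- Hölder
  have holder := integral_mul_le_Lp_mul_Lq_of_nonneg (Real.HolderConjugate.two_two : (2:ℝ).HolderConjugate 2)
    (Filter.Eventually.of_forall fun x => Real.sqrt_nonneg (w x))
    (Filter.Eventually.of_forall fun x => div_nonneg (Real.sqrt_nonneg _) (Real.sqrt_nonneg _))
    (by rw [hp2]; exact hf2) (by rw [hp2]; exact hg2)
  -- rewrite the three integrals
  have hfg : (fun x => Real.sqrt (w x) * (Real.sqrt (n x) / Real.sqrt (w x)))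
      = fun x => Real.sqrt (n x) := by
    funext x
    have hwpos : 0 < Real.sqrt (w x) := Real.sqrt_pos.mpr (hndg x)
    field_simp
  have hfsq : (fun x => Real.sqrt (w x) ^ (2:ℝ)) = w := by
    funext x
    rw [show ((2:ℝ)) = ((2:ℕ):ℝ) by norm_num, Real.rpow_natCast,
      Real.sq_sqrt (hndg x).le]
  have hgsq : (fun x => (Real.sqrt (n x) / Real.sqrt (w x)) ^ (2:ℝ))
      = fun x => n x / w x := by
    funext x
    rw [show ((2:ℝ)) = ((2:ℕ):ℝ) by norm_num, Real.rpow_natCast, div_pow,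
      Real.sq_sqrt (ip2std_nonneg (ρ x)), Real.sq_sqrt (hndg x).le]
  rw [hfg] at holder
  have hA : (∫ x, Real.sqrt (w x) ^ (2:ℝ) ∂μ) = c := by
    rw [hfsq, hc]
  have hB : (∫ x, (Real.sqrt (n x) / Real.sqrt (w x)) ^ (2:ℝ) ∂μ)
      = E - (μ Set.univ).toReal := by
    rw [hgsq, hE]
    have : (∫ x, (2 * ip2std ((2:ℝ)⁻¹ • (ρ x + dual2 (ρ x))) ((2:ℝ)⁻¹ • (ρ x + dual2 (ρ x))) /
        w22 (ρ x) (ρ x)) ∂μ) = ∫ x, (n x / w x + 1) ∂μ := by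
      exact integral_congr_ae (Filter.Eventually.of_forall key)
    rw [this, integral_add hInw (integrable_const 1), integral_const]
    simp [Measure.real]
  rw [hA, hB] at holder
  have hcnn : 0 ≤ c := by
    rw [hc]; exact integral_nonneg fun x => (hndg x).le
  have hBnn : 0 ≤ E - (μ Set.univ).toReal := by
    rw [← hB, hgsq]
    exact integral_nonneg fun x => div_nonneg (ip2std_nonneg (ρ x)) (hndg x).le
  have hI : 0 ≤ ∫ x, Real.sqrt (n x) ∂μ :=
    integral_nonneg fun x => Real.sqrt_nonneg _
  calc (∫ x, Real.sqrt (ip2std (ρ x) (ρ x)) ∂μ) ^ 2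
      = (∫ x, Real.sqrt (n x) ∂μ) ^ 2 := rfl
    _ ≤ (c ^ ((1:ℝ)/2) * (E - (μ Set.univ).toReal) ^ ((1:ℝ)/2)) ^ 2 := by
        exact pow_le_pow_left₀ hI holder 2
    _ = c * (E - (μ Set.univ).toReal) := by
        rw [mul_pow, ← Real.sqrt_eq_rpow, ← Real.sqrt_eq_rpow,
          Real.sq_sqrt hcnn, Real.sq_sqrt hBnn]

end
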